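/- In a tree of curves with K-labels built as above from a single vertex labeled -2, the set of vertices with negative labels forms a connected subtree. -/

import Mathlib

open Finset

/-- Inductively generated labeled trees of exceptional curves at infinity:
start from a single vertex (vertex `0`) with K-label `-2`; either attach a new
leaf `R` to a vertex `P` (new label `l P + 1`), or subdivide an edge `(P,Q)`
by a new vertex `R` (new label `l P + l Q`). The vertex set, edge set and
labeling function are recorded. -/
inductive KTree : Finset ℕ → Finset (Sym2 ℕ) → (ℕ → ℤ) → Prop
  | base : KTree {0} ∅ (fun _ => -2)
  | attach {V E l} (P R : ℕ) : KTree V E l → P ∈ V → R ∉ V →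
      KTree (insert R V) (insert s(P, R) E) (Function.update l R (l P + 1))
  | subdivide {V E l} (P Q R : ℕ) : KTree V E l → s(P, Q) ∈ E → R ∉ V →
      KTree (insert R V) (insert s(P, R) (insert s(R, Q) (E.erase s(P, Q))))
        (Function.update l R (l P + l Q))

/-- The simple graph on `ℕ` determined by a finite set of edges. -/
def graphOfEdges (E : Finset (Sym2 ℕ)) : SimpleGraph ℕ where
  Adj u v := u ≠ v ∧ s(u, v) ∈ E
  symm := ⟨fun u v h => ⟨h.1.symm, by rw [Sym2.eq_swap]; exact h.2⟩⟩
  loopless := ⟨fun u h => h.1 rfl⟩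

lemma induce_adj' {E : Finset (Sym2 ℕ)} {s : Set ℕ} {u v : s}
    (h1 : (u : ℕ) ≠ v) (h2 : s((u : ℕ), (v : ℕ)) ∈ E) :
    ((graphOfEdges E).induce s).Adj u v := ⟨h1, h2⟩

lemma induce_adj_elim {E : Finset (Sym2 ℕ)} {s : Set ℕ} {u v : s}
    (h : ((graphOfEdges E).induce s).Adj u v) :
    (u : ℕ) ≠ v ∧ s((u : ℕ), (v : ℕ)) ∈ E := h

lemma reach_map {α β} {G : SimpleGraph α} {G' : SimpleGraph β} (f : α → β)
    (h : ∀ u v, G.Adj u v → G'.Reachable (f u) (f v)) :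
    ∀ {u v}, G.Reachable u v → G'.Reachable (f u) (f v) := by
  intro u v hr
  obtain ⟨w⟩ := hr
  induction w with
  | nil => exact .refl _
  | cons ha _ ih => exact (h _ _ ha).trans ih

lemma ktree_zero {V E l} (h : KTree V E l) : 0 ∈ V ∧ l 0 = -2 := by
  induction h with
  | base => exact ⟨by simp, rfl⟩
  | @attach V E l P R h hP hR ih =>
      have h0R : (0 : ℕ) ≠ R := fun e => hR (e ▸ ih.1)
      exact ⟨mem_insert_of_mem ih.1, by rw [Function.update_of_ne h0R]; exact ih.2⟩
  | @subdivide V E l P Q R h hPQ hR ih =>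
      have h0R : (0 : ℕ) ≠ R := fun e => hR (e ▸ ih.1)
      exact ⟨mem_insert_of_mem ih.1, by rw [Function.update_of_ne h0R]; exact ih.2⟩

lemma ktree_edge {V E l} (h : KTree V E l) :
    ∀ x y, s(x, y) ∈ E → x ∈ V ∧ y ∈ V := by
  induction h with
  | base => simp
  | @attach V E l P R h hP hR ih =>
      intro x y hxy
      rcases mem_insert.mp hxy with he | he
      · rcases Sym2.eq_iff.mp he with ⟨rfl, rfl⟩ | ⟨rfl, rfl⟩
        · exact ⟨mem_insert_of_mem hP, mem_insert_self _ _⟩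
        · exact ⟨mem_insert_self _ _, mem_insert_of_mem hP⟩
      · exact ⟨mem_insert_of_mem (ih x y he).1, mem_insert_of_mem (ih x y he).2⟩
  | @subdivide V E l P Q R h hPQ hR ih =>
      intro x y hxy
      have hP := (ih P Q hPQ).1
      have hQ := (ih P Q hPQ).2
      rcases mem_insert.mp hxy with he | he
      · rcases Sym2.eq_iff.mp he with ⟨rfl, rfl⟩ | ⟨rfl, rfl⟩
        · exact ⟨mem_insert_of_mem hP, mem_insert_self _ _⟩
        · exact ⟨mem_insert_self _ _, mem_insert_of_mem hP⟩
      rcases mem_insert.mp he with he | he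
      · rcases Sym2.eq_iff.mp he with ⟨rfl, rfl⟩ | ⟨rfl, rfl⟩
        · exact ⟨mem_insert_self _ _, mem_insert_of_mem hQ⟩
        · exact ⟨mem_insert_of_mem hQ, mem_insert_self _ _⟩
      · have := ih x y (mem_of_mem_erase he)
        exact ⟨mem_insert_of_mem this.1, mem_insert_of_mem this.2⟩

lemma ktree_reach {V E l} (h : KTree V E l) :
    ∀ u v (hu : u ∈ V ∧ l u < 0) (hv : v ∈ V ∧ l v < 0),
      ((graphOfEdges E).induce {x : ℕ | x ∈ V ∧ l x < 0}).Reachable ⟨u, hu⟩ ⟨v, hv⟩ := by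
  induction h with
  | base =>
      intro u v hu hv
      have hu0 : u = 0 := by simpa using hu.1
      have hv0 : v = 0 := by simpa using hv.1
      subst hu0; subst hv0
      exact .refl _
  | @attach V E l P R h hP hR ih =>
      intro u v hu hv
      have hmem : ∀ x, x ∈ V ∧ l x < 0 →
          x ∈ insert R V ∧ Function.update l R (l P + 1) x < 0 := by
        intro x hx
        have hxR : x ≠ R := fun e => hR (e ▸ hx.1)
        refine ⟨mem_insert_of_mem hx.1, ?_⟩
        rw [Function.update_of_ne hxR]
        exact hx.2
      have trans : ∀ a b (ha : a ∈ V ∧ l a < 0) (hb : b ∈ V ∧ l b < 0),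
          ((graphOfEdges (insert s(P,R) E)).induce
            {x : ℕ | x ∈ insert R V ∧ Function.update l R (l P + 1) x < 0}).Reachable
            ⟨a, hmem a ha⟩ ⟨b, hmem b hb⟩ := by
        intro a b ha hb
        refine reach_map
          (G := (graphOfEdges E).induce {x : ℕ | x ∈ V ∧ l x < 0})
          (f := fun x => (⟨x.1, hmem x.1 x.2⟩ :
            {z : ℕ | z ∈ insert R V ∧ Function.update l R (l P + 1) z < 0}))
          ?_ (ih a b ha hb)
        rintro x y hxy
        obtain ⟨hne, hmem'⟩ := induce_adj_elim hxy
        exact SimpleGraph.Adj.reachable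
          (show ((graphOfEdges (insert s(P,R) E)).induce
              {z : ℕ | z ∈ insert R V ∧ Function.update l R (l P + 1) z < 0}).Adj
            ⟨x.1, hmem x.1 x.2⟩ ⟨y.1, hmem y.1 y.2⟩ from ⟨hne, mem_insert_of_mem hmem'⟩)
      have getold : ∀ x, x ≠ R → x ∈ insert R V ∧ Function.update l R (l P + 1) x < 0 →
          x ∈ V ∧ l x < 0 := by
        intro x hxR hx
        have hxV : x ∈ V := by
          rcases mem_insert.mp hx.1 with h' | h'
          · exact absurd h' hxR
          · exact h'
        refine ⟨hxV, ?_⟩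
        have := hx.2
        rwa [Function.update_of_ne hxR] at this
      have hRstep : ∀ (hRm : R ∈ insert R V ∧ Function.update l R (l P + 1) R < 0)
          (b : ℕ) (hb : b ∈ V ∧ l b < 0),
          ((graphOfEdges (insert s(P,R) E)).induce
            {x : ℕ | x ∈ insert R V ∧ Function.update l R (l P + 1) x < 0}).Reachable
            ⟨R, hRm⟩ ⟨b, hmem b hb⟩ := by
        intro hRm b hb
        have hPneg : l P < 0 := by
          have := hRm.2; rw [Function.update_self] at this; omega
        have hRP : R ≠ P := fun e => hR (e ▸ hP)
        have step := induce_adj' (u := (⟨R, hRm⟩ :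
            {z : ℕ | z ∈ insert R V ∧ Function.update l R (l P + 1) z < 0}))
          (v := ⟨P, hmem P ⟨hP, hPneg⟩⟩)
          hRP (show s(R, P) ∈ insert s(P,R) E by
            rw [Sym2.eq_swap]; exact mem_insert_self _ _)
        exact step.reachable.trans (trans P b ⟨hP, hPneg⟩ hb)
      by_cases huR : u = R
      · by_cases hvR : v = R
        · have : (⟨u, hu⟩ : {z : ℕ | z ∈ insert R V ∧ Function.update l R (l P + 1) z < 0})
              = ⟨v, hv⟩ := Subtype.ext (huR.trans hvR.symm)
          rw [this]
        · have := hRstep (huR ▸ hu) v (getold v hvR hv)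
          have he : (⟨u, hu⟩ : {z : ℕ | z ∈ insert R V ∧ Function.update l R (l P + 1) z < 0})
              = ⟨R, huR ▸ hu⟩ := Subtype.ext huR
          rw [he]
          exact this
      · by_cases hvR : v = R
        · have he : (⟨v, hv⟩ : {z : ℕ | z ∈ insert R V ∧ Function.update l R (l P + 1) z < 0})
              = ⟨R, hvR ▸ hv⟩ := Subtype.ext hvR
          rw [he]
          exact (hRstep (hvR ▸ hv) u (getold u huR hu)).symm
        · exact trans u v (getold u huR hu) (getold v hvR hv)
  | @subdivide V E l P Q R h hPQ hR ih =>
      intro u v hu hv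
      obtain ⟨hPV, hQV⟩ := ktree_edge h P Q hPQ
      set E' := insert s(P,R) (insert s(R,Q) (E.erase s(P,Q))) with hE'
      have hmem : ∀ x, x ∈ V ∧ l x < 0 →
          x ∈ insert R V ∧ Function.update l R (l P + l Q) x < 0 := by
        intro x hx
        have hxR : x ≠ R := fun e => hR (e ▸ hx.1)
        refine ⟨mem_insert_of_mem hx.1, ?_⟩
        rw [Function.update_of_ne hxR]
        exact hx.2
      have hPRmem : s(P, R) ∈ E' := mem_insert_self _ _
      have hRQmem : s(R, Q) ∈ E' := mem_insert_of_mem (mem_insert_self _ _)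
      have trans : ∀ a b (ha : a ∈ V ∧ l a < 0) (hb : b ∈ V ∧ l b < 0),
          ((graphOfEdges E').induce
            {x : ℕ | x ∈ insert R V ∧ Function.update l R (l P + l Q) x < 0}).Reachable
            ⟨a, hmem a ha⟩ ⟨b, hmem b hb⟩ := by
        intro a b ha hb
        refine reach_map
          (G := (graphOfEdges E).induce {x : ℕ | x ∈ V ∧ l x < 0})
          (f := fun x => (⟨x.1, hmem x.1 x.2⟩ :
            {z : ℕ | z ∈ insert R V ∧ Function.update l R (l P + l Q) z < 0}))
          ?_ (ih a b ha hb)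
        rintro ⟨x, hx⟩ ⟨y, hy⟩ hxy
        obtain ⟨hne, hmemE⟩ := induce_adj_elim hxy
        by_cases hPQe : s(x, y) = s(P, Q)
        · have hxy' : (x = P ∧ y = Q) ∨ (x = Q ∧ y = P) := Sym2.eq_iff.mp hPQe
          have hRneg : Function.update l R (l P + l Q) R < 0 := by
            rw [Function.update_self]
            have hx2 := hx.2; have hy2 := hy.2
            rcases hxy' with ⟨rfl, rfl⟩ | ⟨rfl, rfl⟩ <;> omega
          have hRmem : R ∈ insert R V ∧ Function.update l R (l P + l Q) R < 0 :=
            ⟨mem_insert_self _ _, hRneg⟩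
          have hxR : x ≠ R := fun e => hR (e ▸ hx.1)
          have hyR : y ≠ R := fun e => hR (e ▸ hy.1)
          have sxR : s(x, R) ∈ E' := by
            rcases hxy' with ⟨rfl, _⟩ | ⟨rfl, _⟩
            · exact hPRmem
            · rw [Sym2.eq_swap]; exact hRQmem
          have sRy : s(R, y) ∈ E' := by
            rcases hxy' with ⟨_, rfl⟩ | ⟨_, rfl⟩
            · exact hRQmem
            · rw [Sym2.eq_swap]; exact hPRmem
          have s1 := induce_adj'
            (u := (⟨x, hmem x hx⟩ :
              {z : ℕ | z ∈ insert R V ∧ Function.update l R (l P + l Q) z < 0}))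
            (v := ⟨R, hRmem⟩) hxR (show s(x, R) ∈ E' from sxR)
          have s2 := induce_adj'
            (u := (⟨R, hRmem⟩ :
              {z : ℕ | z ∈ insert R V ∧ Function.update l R (l P + l Q) z < 0}))
            (v := ⟨y, hmem y hy⟩) (fun e => hyR e.symm) (show s(R, y) ∈ E' from sRy)
          exact s1.reachable.trans s2.reachable
        · exact SimpleGraph.Adj.reachable
            (show ((graphOfEdges E').induce
                {z : ℕ | z ∈ insert R V ∧ Function.update l R (l P + l Q) z < 0}).Adj
              ⟨x, hmem x hx⟩ ⟨y, hmem y hy⟩ from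
              ⟨hne, mem_insert_of_mem (mem_insert_of_mem (mem_erase.mpr ⟨hPQe, hmemE⟩))⟩)
      have getold : ∀ x, x ≠ R → x ∈ insert R V ∧ Function.update l R (l P + l Q) x < 0 →
          x ∈ V ∧ l x < 0 := by
        intro x hxR hx
        have hxV : x ∈ V := by
          rcases mem_insert.mp hx.1 with h' | h'
          · exact absurd h' hxR
          · exact h'
        refine ⟨hxV, ?_⟩
        have := hx.2
        rwa [Function.update_of_ne hxR] at this
      have hRstep : ∀ (hRm : R ∈ insert R V ∧ Function.update l R (l P + l Q) R < 0)
          (b : ℕ) (hb : b ∈ V ∧ l b < 0),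
          ((graphOfEdges E').induce
            {x : ℕ | x ∈ insert R V ∧ Function.update l R (l P + l Q) x < 0}).Reachable
            ⟨R, hRm⟩ ⟨b, hmem b hb⟩ := by
        intro hRm b hb
        have hsum : l P + l Q < 0 := by
          have := hRm.2; rwa [Function.update_self] at this
        by_cases hPneg : l P < 0
        · have hRP : R ≠ P := fun e => hR (e ▸ hPV)
          have step := induce_adj' (u := (⟨R, hRm⟩ :
              {z : ℕ | z ∈ insert R V ∧ Function.update l R (l P + l Q) z < 0}))
            (v := ⟨P, hmem P ⟨hPV, hPneg⟩⟩)
            hRP (show s(R, P) ∈ E' by rw [Sym2.eq_swap]; exact hPRmem)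
          exact step.reachable.trans (trans P b ⟨hPV, hPneg⟩ hb)
        · have hQneg : l Q < 0 := by omega
          have hRQ : R ≠ Q := fun e => hR (e ▸ hQV)
          have step := induce_adj' (u := (⟨R, hRm⟩ :
              {z : ℕ | z ∈ insert R V ∧ Function.update l R (l P + l Q) z < 0}))
            (v := ⟨Q, hmem Q ⟨hQV, hQneg⟩⟩)
            hRQ (show s(R, Q) ∈ E' from hRQmem)
          exact step.reachable.trans (trans Q b ⟨hQV, hQneg⟩ hb)
      by_cases huR : u = R
      · by_cases hvR : v = R
        · have : (⟨u, hu⟩ : {z : ℕ | z ∈ insert R V ∧ Function.update l R (l P + l Q) z < 0})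
              = ⟨v, hv⟩ := Subtype.ext (huR.trans hvR.symm)
          rw [this]
        · have he : (⟨u, hu⟩ : {z : ℕ | z ∈ insert R V ∧ Function.update l R (l P + l Q) z < 0})
              = ⟨R, huR ▸ hu⟩ := Subtype.ext huR
          rw [he]
          exact hRstep (huR ▸ hu) v (getold v hvR hv)
      · by_cases hvR : v = R
        · have he : (⟨v, hv⟩ : {z : ℕ | z ∈ insert R V ∧ Function.update l R (l P + l Q) z < 0})
              = ⟨R, hvR ▸ hv⟩ := Subtype.ext hvR
          rw [he]
          exact (hRstep (hvR ▸ hv) u (getold u huR hu)).symm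
        · exact trans u v (getold u huR hu) (getold v hvR hv)

/-- In a K-labeled tree of exceptional curves, the vertices with negative
labels form a connected subtree. -/
theorem ktree_negative_connected {V : Finset ℕ} {E : Finset (Sym2 ℕ)} {l : ℕ → ℤ}
    (h : KTree V E l) :
    ((graphOfEdges E).induce {v : ℕ | v ∈ V ∧ l v < 0}).Connected := by
  obtain ⟨h0, hl0⟩ := ktree_zero h
  haveI : Nonempty ({v : ℕ | v ∈ V ∧ l v < 0} : Set ℕ) :=
    ⟨⟨0, h0, by rw [hl0]; norm_num⟩⟩
  exact ⟨fun u v => ktree_reach h u.1 v.1 u.2 v.2⟩
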